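/- arXiv:1812.03043 — 2 statements merged into one kernel-verified Lean document; each statement's English description precedes it below -/
import Mathlib

section
/- Let N ≥ 3 be an integer, δ ∈ ℝ with δ > 2/(N−2), and B > 0, C > 0. If a > (2C/(δ(N−2)))·[C(δ(N−2)−2)/(δ(N−2)B)]^{(δ(N−2)−2)/2}, then for every y > 0 one has a·y^{1+δ} + B·y − C·y^{N/(N−2)} > 0. -/
open Real

theorem stmt_5 (N : ℕ) (hN : 3 ≤ N) (δ B C a : ℝ) (hδ : 2 / ((N : ℝ) - 2) < δ)
    (hB : 0 < B) (hC : 0 < C)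
    (ha : 2 * C / (δ * ((N : ℝ) - 2)) *
        (C * (δ * ((N : ℝ) - 2) - 2) / (δ * ((N : ℝ) - 2) * B)) ^
          ((δ * ((N : ℝ) - 2) - 2) / 2) < a) :
    ∀ y : ℝ, 0 < y → 0 < a * y ^ (1 + δ) + B * y - C * y ^ ((N : ℝ) / ((N : ℝ) - 2)) := by
  intro y hy
  set M : ℝ := (N : ℝ) - 2 with hMdef
  have hN3 : (3 : ℝ) ≤ (N : ℝ) := by exact_mod_cast hN
  have hM1 : (1 : ℝ) ≤ M := by rw [hMdef]; linarith
  have hM0 : (0 : ℝ) < M := by linarith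
  have hNM : (N : ℝ) = M + 2 := by rw [hMdef]; ring
  have hκ : 2 < δ * M := by rw [div_lt_iff₀ hM0] at hδ; linarith
  set κ : ℝ := δ * M with hκdef
  have hκ0 : (0 : ℝ) < κ := by linarith
  have hδ0 : (0 : ℝ) < δ := lt_trans (div_pos two_pos hM0) hδ
  set D : ℝ := C * (κ - 2) / (κ * B) with hDdef
  have hD0 : 0 < D := by
    rw [hDdef]
    exact div_pos (mul_pos hC (by linarith)) (mul_pos hκ0 hB)
  set e : ℝ := (κ - 2) / 2 with hedef
  set T : ℝ := 2 * C / κ * D ^ e with hTdef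
  have hT0 : 0 < T := by
    rw [hTdef]
    exact mul_pos (div_pos (by linarith) hκ0) (rpow_pos_of_pos hD0 e)
  -- weights
  set w₁ : ℝ := 2 / κ with hw₁def
  set w₂ : ℝ := (κ - 2) / κ with hw₂def
  have hw₁ : 0 < w₁ := div_pos two_pos hκ0
  have hw₂ : 0 < w₂ := div_pos (by linarith) hκ0
  have hsum : w₁ + w₂ = 1 := by
    rw [hw₁def, hw₂def]; field_simp; ring
  set p₁ : ℝ := C * D ^ e * y ^ (1 + δ) with hp₁def
  set p₂ : ℝ := (C / D) * y with hp₂def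
  have hp₁0 : 0 < p₁ :=
    mul_pos (mul_pos hC (rpow_pos_of_pos hD0 e)) (rpow_pos_of_pos hy _)
  have hp₂0 : 0 < p₂ := mul_pos (div_pos hC hD0) hy
  have geom := Real.geom_mean_le_arith_mean2_weighted hw₁.le hw₂.le hp₁0.le hp₂0.le hsum
  -- LHS equals C * y ^ (N/M)
  have hLHS : p₁ ^ w₁ * p₂ ^ w₂ = C * y ^ ((N : ℝ) / M) := by
    have h1 : p₁ ^ w₁ = C ^ w₁ * D ^ (e * w₁) * y ^ ((1 + δ) * w₁) := by
      rw [hp₁def, Real.mul_rpow (by positivity) (by positivity),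
        Real.mul_rpow hC.le (by positivity),
        ← Real.rpow_mul hD0.le, ← Real.rpow_mul hy.le]
    have h2 : p₂ ^ w₂ = C ^ w₂ / D ^ w₂ * y ^ w₂ := by
      rw [hp₂def, Real.mul_rpow (by positivity) hy.le, Real.div_rpow hC.le hD0.le]
    have hew : e * w₁ = w₂ := by
      rw [hedef, hw₁def, hw₂def]; field_simp
    have hexp : (1 + δ) * w₁ + w₂ = (N : ℝ) / M := by
      rw [hw₁def, hw₂def, hκdef, hNM]
      field_simp
      ring
    rw [h1, h2, hew]
    rw [show C ^ w₁ * D ^ w₂ * y ^ ((1 + δ) * w₁) * (C ^ w₂ / D ^ w₂ * y ^ w₂)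
        = (C ^ w₁ * C ^ w₂) * (D ^ w₂ / D ^ w₂) * (y ^ ((1 + δ) * w₁) * y ^ w₂) by ring,
      ← Real.rpow_add hC, ← Real.rpow_add hy, hsum, Real.rpow_one,
      div_self (ne_of_gt (rpow_pos_of_pos hD0 w₂)), hexp]
    ring
  have hR1 : w₁ * p₁ = T * y ^ (1 + δ) := by
    rw [hw₁def, hp₁def, hTdef]; ring
  have hκ2 : κ - 2 ≠ 0 := by linarith
  have hCD : C / D = κ * B / (κ - 2) := by
    rw [hDdef]
    field_simp
  have hR2 : w₂ * p₂ = B * y := by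
    rw [hp₂def, hCD, hw₂def]
    field_simp
  rw [hLHS, hR1, hR2] at geom
  have hy1δ : 0 < y ^ (1 + δ) := rpow_pos_of_pos hy _
  nlinarith [mul_pos (sub_pos.mpr ha) hy1δ]
end

section
/- Let N ≥ 3 be an integer, δ = 2/(N−2), p ∈ ℝ with 2 < p < 2N/(N−2), and B > 0, C > 0, C′ > 0. If a > C′ + ((p−2)/(2δ))·[(2(δ+1)−p)/(2δB)]^{(2(δ+1)−p)/(p−2)}·C^{2δ/(p−2)}, then for every y > 0 one has a·y^{1+δ} + B·y − C′·y^{N/(N−2)} − C·y^{p/2} > 0. -/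
open Real

theorem stmt_6 (N : ℕ) (hN : 3 ≤ N) (δ p B C C' a : ℝ) (hδ : δ = 2 / ((N : ℝ) - 2))
    (hp2 : 2 < p) (hpN : p < 2 * (N : ℝ) / ((N : ℝ) - 2))
    (hB : 0 < B) (hC : 0 < C) (hC' : 0 < C')
    (ha : C' + (p - 2) / (2 * δ) *
        ((2 * (δ + 1) - p) / (2 * δ * B)) ^ ((2 * (δ + 1) - p) / (p - 2)) *
        C ^ (2 * δ / (p - 2)) < a) :
    ∀ y : ℝ, 0 < y →
      0 < a * y ^ (1 + δ) + B * y - C' * y ^ ((N : ℝ) / ((N : ℝ) - 2)) - C * y ^ (p / 2) := by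
  intro y hy
  have hN3 : (3:ℝ) ≤ (N:ℝ) := by exact_mod_cast hN
  have hN2pos : (0:ℝ) < (N:ℝ) - 2 := by linarith
  have hN2ne : ((N:ℝ) - 2) ≠ 0 := ne_of_gt hN2pos
  have hδpos : 0 < δ := by rw [hδ]; positivity
  have hδne : δ ≠ 0 := ne_of_gt hδpos
  have hBne : B ≠ 0 := ne_of_gt hB
  have hp2ne : p - 2 ≠ 0 := by intro h; nlinarith
  have hNδ : (N:ℝ) / ((N:ℝ) - 2) = 1 + δ := by
    rw [hδ]; field_simp; ring
  have hplt : p < 2 + 2 * δ := by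
    have h2 : 2 + 2 * δ = 2 * (N:ℝ) / ((N:ℝ) - 2) := by
      rw [hδ]; field_simp; ring
    linarith [h2 ▸ hpN]
  set θ := (p - 2) / (2 * δ) with hθ
  have h2δ : (0:ℝ) < 2 * δ := by linarith
  have hθpos : 0 < θ := div_pos (by linarith) h2δ
  have hθne : θ ≠ 0 := ne_of_gt hθpos
  have hθlt : θ < 1 := by
    rw [hθ, div_lt_one h2δ]; linarith
  have h1θ : 0 < 1 - θ := by linarith
  have h1θne : (1 - θ) ≠ 0 := ne_of_gt h1θ
  set A := (1 - θ) / B with hA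
  have hApos : 0 < A := div_pos h1θ hB
  set E := A ^ ((1 - θ) / θ) * C ^ (1 / θ) with hE
  have hEpos : 0 < E := by positivity
  -- rewrite the hypothesis on a in terms of θ and E
  have haE : C' + θ * E < a := by
    have e1 : A = (2 * (δ + 1) - p) / (2 * δ * B) := by
      rw [hA, hθ]; field_simp; ring
    have e2 : (1 - θ) / θ = (2 * (δ + 1) - p) / (p - 2) := by
      rw [hθ]; field_simp; ring
    have e3 : 1 / θ = 2 * δ / (p - 2) := by
      rw [hθ]; field_simp
    rw [hE, e1, e2, e3, ← mul_assoc]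
    exact ha
  -- weighted AM-GM
  have hy1 : 0 < y ^ ((1:ℝ) + δ) := rpow_pos_of_pos hy _
  have hgm := Real.geom_mean_le_arith_mean2_weighted hθpos.le h1θ.le
      (by positivity : (0:ℝ) ≤ E * y ^ ((1:ℝ) + δ))
      (by positivity : (0:ℝ) ≤ B / (1 - θ) * y) (by ring)
  have hEθ : E ^ θ = A ^ (1 - θ) * C := by
    rw [hE, Real.mul_rpow (rpow_nonneg hApos.le _) (rpow_nonneg hC.le _),
      ← Real.rpow_mul hApos.le, ← Real.rpow_mul hC.le,
      div_mul_cancel₀ _ hθne, one_div, inv_mul_cancel₀ hθne, Real.rpow_one]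
  have hAB : A ^ (1 - θ) * (B / (1 - θ)) ^ (1 - θ) = 1 := by
    rw [← Real.mul_rpow hApos.le (by positivity)]
    have h1 : A * (B / (1 - θ)) = 1 := by rw [hA]; field_simp
    rw [h1, Real.one_rpow]
  have hyp : (y ^ ((1:ℝ) + δ)) ^ θ * y ^ (1 - θ) = y ^ (p / 2) := by
    rw [← Real.rpow_mul hy.le, ← Real.rpow_add hy]
    congr 1
    rw [hθ]; field_simp; ring
  have key : (E * y ^ ((1:ℝ) + δ)) ^ θ * (B / (1 - θ) * y) ^ (1 - θ) = C * y ^ (p / 2) := by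
    rw [Real.mul_rpow hEpos.le (rpow_nonneg hy.le _),
      Real.mul_rpow (by positivity) hy.le]
    calc E ^ θ * (y ^ ((1:ℝ) + δ)) ^ θ * ((B / (1 - θ)) ^ (1 - θ) * y ^ (1 - θ))
        = (E ^ θ * (B / (1 - θ)) ^ (1 - θ)) * ((y ^ ((1:ℝ) + δ)) ^ θ * y ^ (1 - θ)) := by
          ring
      _ = (A ^ (1 - θ) * (B / (1 - θ)) ^ (1 - θ) * C) * y ^ (p / 2) := by
          rw [hEθ, hyp]; ring
      _ = C * y ^ (p / 2) := by rw [hAB, one_mul]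
  have hrhs : θ * (E * y ^ ((1:ℝ) + δ)) + (1 - θ) * (B / (1 - θ) * y)
      = θ * E * y ^ ((1:ℝ) + δ) + B * y := by
    field_simp
  have hCy : C * y ^ (p / 2) ≤ θ * E * y ^ ((1:ℝ) + δ) + B * y := by
    rw [← key, ← hrhs]; exact hgm
  have hprod : 0 < (a - (C' + θ * E)) * y ^ ((1:ℝ) + δ) :=
    mul_pos (by linarith) hy1
  rw [hNδ]
  nlinarith [hprod, hCy]
end
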